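/- Fixed point of the error recursion: let 𝒳 ∈ (0,∞), 𝒴 ∈ [0,1), Ξ ≥ 0 with 𝒳 < (1−𝒴)². Define ε_M = 0 and backwards ε_k = sqrt(𝒳·(ε_{k+1}² + Ξ)) + 𝒴·ε_{k+1}. Then the sequence (ε_k) (indexed by decreasing k, i.e., increasing number of iterations) is monotone nondecreasing in the iteration count and converges, as the number of iterations tends to infinity, to L = sqrt( Ξ / ((1−𝒴)²/𝒳 − 1) ). -/

import Mathlib

open Filter

/-- Fixed point of the error-accumulation recursion: with `𝒳 ∈ (0, (1−𝒴)²)`,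
`𝒴 ∈ [0,1)`, `Ξ ≥ 0`, the sequence generated from `ε₀ = 0` by
`ε_{n+1} = sqrt(𝒳(ε_n² + Ξ)) + 𝒴 ε_n` is monotone nondecreasing in the iteration
count and converges to `L = sqrt(Ξ / ((1−𝒴)²/𝒳 − 1))`. -/
theorem stmt9 (X Y Ξ : ℝ) (hX : 0 < X) (hXY : X < (1 - Y) ^ 2)
    (hY0 : 0 ≤ Y) (hY1 : Y < 1) (hΞ : 0 ≤ Ξ)
    (e : ℕ → ℝ) (h0 : e 0 = 0)
    (hrec : ∀ n, e (n + 1) = Real.sqrt (X * ((e n) ^ 2 + Ξ)) + Y * e n) :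
    Monotone e ∧
      Tendsto e atTop (nhds (Real.sqrt (Ξ / ((1 - Y) ^ 2 / X - 1)))) := by
  set L := Real.sqrt (Ξ / ((1 - Y) ^ 2 / X - 1)) with hLdef
  have hYpos : (0:ℝ) < 1 - Y := by linarith
  have hD : 0 < (1 - Y) ^ 2 / X - 1 := by
    rw [sub_pos, lt_div_iff₀ hX, one_mul]; exact hXY
  have hL0 : 0 ≤ L := Real.sqrt_nonneg _
  have hLsq : L ^ 2 = Ξ / ((1 - Y) ^ 2 / X - 1) := by
    rw [hLdef, Real.sq_sqrt (div_nonneg hΞ hD.le)]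
  have hA : 0 < (1 - Y) ^ 2 - X := by nlinarith
  have hLsq' : L ^ 2 = X * Ξ / ((1 - Y) ^ 2 - X) := by
    have hDX : (1 - Y) ^ 2 / X - 1 = ((1 - Y) ^ 2 - X) / X := by
      field_simp
    rw [hLsq, hDX, div_div_eq_mul_div]
    ring
  have hfix : Real.sqrt (X * (L ^ 2 + Ξ)) + Y * L = L := by
    have hkey : X * (L ^ 2 + Ξ) = ((1 - Y) * L) ^ 2 := by
      rw [mul_pow, hLsq']
      field_simp
      ring
    rw [hkey, Real.sqrt_sq (by positivity)]; ring
  -- monotonicity of the iteration map on nonnegatives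
  have hg : ∀ a b : ℝ, 0 ≤ a → a ≤ b →
      Real.sqrt (X * (a ^ 2 + Ξ)) + Y * a ≤ Real.sqrt (X * (b ^ 2 + Ξ)) + Y * b := by
    intro a b ha hab
    have h2 : a ^ 2 ≤ b ^ 2 := by nlinarith
    have := Real.sqrt_le_sqrt (by nlinarith : X * (a ^ 2 + Ξ) ≤ X * (b ^ 2 + Ξ))
    nlinarith
  have hpos : ∀ n, 0 ≤ e n := by
    intro n; induction n with
    | zero => simp [h0]
    | succ n ih =>
      rw [hrec n]
      have := Real.sqrt_nonneg (X * (e n ^ 2 + Ξ))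
      nlinarith
  have hle : ∀ n, e n ≤ L := by
    intro n; induction n with
    | zero => simpa [h0] using hL0
    | succ n ih =>
      rw [hrec n]
      calc Real.sqrt (X * (e n ^ 2 + Ξ)) + Y * e n
          ≤ Real.sqrt (X * (L ^ 2 + Ξ)) + Y * L := hg _ _ (hpos n) ih
        _ = L := hfix
  have hstep : ∀ n, e n ≤ e (n + 1) := by
    intro n; induction n with
    | zero =>
      rw [hrec 0, h0]
      have := Real.sqrt_nonneg (X * ((0:ℝ) ^ 2 + Ξ))
      simp only [h0] at *
      nlinarith
    | succ n ih =>
      have h := hg _ _ (hpos n) ih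
      rw [← hrec n, ← hrec (n + 1)] at h
      exact h
  have hmono : Monotone e := monotone_nat_of_le_succ hstep
  have hbdd : BddAbove (Set.range e) := ⟨L, by rintro x ⟨n, rfl⟩; exact hle n⟩
  have htend : Tendsto e atTop (nhds (⨆ n, e n)) := tendsto_atTop_ciSup hmono hbdd
  set l := ⨆ n, e n with hl
  have hl0 : 0 ≤ l := by
    have := le_ciSup hbdd 0
    rw [h0] at this; exact this
  -- the limit is a fixed point
  have hcont : Continuous (fun x : ℝ => Real.sqrt (X * (x ^ 2 + Ξ)) + Y * x) := by
    fun_prop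
  have h1 : Tendsto (fun n => e (n + 1)) atTop (nhds l) :=
    htend.comp (tendsto_add_atTop_nat 1)
  have h2 : Tendsto (fun n => e (n + 1)) atTop
      (nhds (Real.sqrt (X * (l ^ 2 + Ξ)) + Y * l)) := by
    have := (hcont.tendsto l).comp htend
    simpa [Function.comp_def, hrec] using this
  have hfixl : Real.sqrt (X * (l ^ 2 + Ξ)) + Y * l = l := tendsto_nhds_unique h2 h1
  have hsq : X * (l ^ 2 + Ξ) = ((1 - Y) * l) ^ 2 := by
    have h3 : Real.sqrt (X * (l ^ 2 + Ξ)) = (1 - Y) * l := by linarith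
    rw [← h3, Real.sq_sqrt (by positivity)]
  have hlsq : l ^ 2 = X * Ξ / ((1 - Y) ^ 2 - X) := by
    rw [eq_div_iff hA.ne']
    nlinarith [hsq]
  have hlL : l = L := by
    rw [← Real.sqrt_sq hl0, hlsq, ← hLsq', Real.sqrt_sq hL0]
  refine ⟨hmono, ?_⟩
  rw [← hlL]
  exact htend
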